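/- arXiv:1910.00502 — 2 statements merged into one kernel-verified Lean document; each statement's English description precedes it below -/
import Mathlib

section
/- The iteration Δ^0 = conv(Δ) ∩ ℤ^n, Δ^i = Mid(Δ^{i-1}) ∪ Δ, is non-increasing after the first step (Δ^{i+1} ⊆ Δ^i for all i ≥ 1), stabilizes after finitely many steps, and its stable value is the maximal Δ-mediated set Δ*. -/
open Set

/-- Cast an integer lattice point to a real point. -/
def toR {n : ℕ} (p : Fin n → ℤ) : Fin n → ℝ := fun i => (p i : ℝ)

/-- A lattice point all of whose coordinates are even, i.e., a point of `(2ℤ)^n`. -/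
def Even2 {n : ℕ} (p : Fin n → ℤ) : Prop := ∀ i, 2 ∣ p i

/-- The set of midpoints of pairs of distinct even points of `L`. -/
def Mid2 {n : ℕ} (L : Set (Fin n → ℤ)) : Set (Fin n → ℤ) :=
  {m | ∃ s ∈ L, ∃ t ∈ L, Even2 s ∧ Even2 t ∧ s ≠ t ∧ s + t = 2 • m}

/-- `L ⊆ ℤ^n` is `Δ`-mediated if it contains `Δ` and every element of `L`
is a midpoint of two distinct even points of `L` or belongs to `Δ`. -/
def IsMediated {n : ℕ} (Δ L : Set (Fin n → ℤ)) : Prop :=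
  L.Finite ∧ Δ ⊆ L ∧ L ⊆ Mid2 L ∪ Δ

/-- The lattice points of the convex hull `conv(Δ) ∩ ℤ^n`. -/
def convZ {n : ℕ} (Δ : Set (Fin n → ℤ)) : Set (Fin n → ℤ) :=
  {p | toR p ∈ convexHull ℝ (toR '' Δ)}

lemma toR_inj {n : ℕ} : Function.Injective (toR (n := n)) := by
  intro p q h
  funext i
  have := congrFun h i
  simp only [toR] at this
  exact_mod_cast this

lemma toR_mid {n : ℕ} {s t m : Fin n → ℤ} (h : s + t = 2 • m) :
    (1/2 : ℝ) • toR s + (1/2 : ℝ) • toR t = toR m := by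
  funext i
  have h1 : s i + t i = 2 * m i := by
    have := congrFun h i
    simpa [two_mul, two_smul] using this
  have h2 : (s i : ℝ) + t i = 2 * m i := by exact_mod_cast h1
  simp only [Pi.add_apply, Pi.smul_apply, toR, smul_eq_mul]
  linarith

lemma mid2_convZ {n : ℕ} {Δ : Set (Fin n → ℤ)} : Mid2 (convZ Δ) ⊆ convZ Δ := by
  rintro m ⟨s, hs, t, ht, _, _, _, hsum⟩
  have := (convex_convexHull ℝ (toR '' Δ)) hs ht (by norm_num : (0:ℝ) ≤ 1/2)
    (by norm_num : (0:ℝ) ≤ 1/2) (by norm_num)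
  show toR m ∈ convexHull ℝ (toR '' Δ)
  rw [← toR_mid hsum]
  exact this

lemma mediated_subset_convZ {n : ℕ} {Δ L : Set (Fin n → ℤ)} (hΔ : Δ.Finite)
    (hL : L.Finite) (hsub : L ⊆ Mid2 L ∪ Δ) : L ⊆ convZ Δ := by
  have hcomp : IsCompact (convexHull ℝ (toR '' L)) := (hL.image toR).isCompact_convexHull ℝ
  have hKM := closure_convexHull_extremePoints hcomp (convex_convexHull ℝ _)
  have hext : (convexHull ℝ (toR '' L)).extremePoints ℝ ⊆ toR '' Δ := by
    intro x hx
    obtain ⟨q, hq, rfl⟩ := extremePoints_convexHull_subset hx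
    rcases hsub hq with hmid | hd
    · exfalso
      obtain ⟨s, hs, t, ht, _, _, hst, hsum⟩ := hmid
      have hseg : toR q ∈ openSegment ℝ (toR s) (toR t) :=
        ⟨1/2, 1/2, by norm_num, by norm_num, by norm_num, toR_mid hsum⟩
      have h2 := (mem_extremePoints.1 hx).2 _ (subset_convexHull ℝ _ ⟨s, hs, rfl⟩)
        _ (subset_convexHull ℝ _ ⟨t, ht, rfl⟩) hseg
      exact hst (toR_inj (h2.1.trans h2.2.symm))
    · exact ⟨q, hd, rfl⟩
  have hKsub : convexHull ℝ (toR '' L) ⊆ convexHull ℝ (toR '' Δ) := by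
    calc convexHull ℝ (toR '' L)
        = closure (convexHull ℝ ((convexHull ℝ (toR '' L)).extremePoints ℝ)) := hKM.symm
      _ ⊆ closure (convexHull ℝ (toR '' Δ)) := closure_mono (convexHull_mono hext)
      _ = convexHull ℝ (toR '' Δ) := ((hΔ.image toR).isClosed_convexHull ℝ).closure_eq
  intro p hp
  exact hKsub (subset_convexHull ℝ _ ⟨p, hp, rfl⟩)

lemma convZ_finite {n : ℕ} {Δ : Set (Fin n → ℤ)} (hΔ : Δ.Finite) : (convZ Δ).Finite := by
  obtain ⟨R, hR⟩ := ((hΔ.image toR).isCompact_convexHull ℝ |>.isBounded).subset_closedBall 0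
  have hsub : convZ Δ ⊆ Set.pi Set.univ (fun _ : Fin n => Set.Icc (-⌈R⌉) ⌈R⌉) := by
    intro p hp i _
    have h2 : ‖toR p‖ ≤ R := by simpa [mem_closedBall_zero_iff] using hR hp
    have h3 : |(p i : ℝ)| ≤ R := le_trans (by simpa [toR] using norm_le_pi_norm (toR p) i) h2
    have hub : (p i : ℝ) ≤ (⌈R⌉ : ℝ) := le_trans (le_of_abs_le h3) (Int.le_ceil R)
    have hlb : (-⌈R⌉ : ℝ) ≤ (p i : ℝ) := by
      have := neg_abs_le ((p i : ℝ))
      have h4 : -R ≤ (p i : ℝ) := by linarith [neg_le_of_abs_le h3]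
      have h5 : (↑⌈R⌉ : ℝ) ≥ R := Int.le_ceil R
      linarith
    exact ⟨by exact_mod_cast hlb, by exact_mod_cast hub⟩
  exact (Set.Finite.pi (fun _ => Set.finite_Icc _ _)).subset hsub

lemma mid2_mono {n : ℕ} {A B : Set (Fin n → ℤ)} (h : A ⊆ B) : Mid2 A ⊆ Mid2 B := by
  rintro m ⟨s, hs, t, ht, hes, het, hst, hsum⟩
  exact ⟨s, h hs, t, h ht, hes, het, hst, hsum⟩

/-- Reznick's iteration `Δ⁰ = conv(Δ) ∩ ℤ^n`, `Δ^i = Mid(Δ^{i-1}) ∪ Δ` is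
non-increasing after the first step, stabilizes after finitely many steps, and
its stable value is the maximal `Δ`-mediated set. -/
theorem iteration_stabilizes_at_MMS {n : ℕ} (Δ : Set (Fin n → ℤ))
    (hfin : Δ.Finite) (heven : ∀ p ∈ Δ, Even2 p)
    (D : ℕ → Set (Fin n → ℤ)) (h0 : D 0 = convZ Δ)
    (hstep : ∀ i, D (i + 1) = Mid2 (D i) ∪ Δ) :
    (∀ i, 1 ≤ i → D (i + 1) ⊆ D i) ∧
    ∃ N, (∀ k, N ≤ k → D k = D N) ∧
      IsMediated Δ (D N) ∧ ∀ L, IsMediated Δ L → L ⊆ D N := by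
  have hΔ0 : Δ ⊆ D 0 := by
    rw [h0]
    intro p hp
    exact subset_convexHull ℝ _ ⟨p, hp, rfl⟩
  have h10 : D 1 ⊆ D 0 := by
    rw [hstep 0, h0]
    rintro m (hm | hm)
    · exact mid2_convZ hm
    · exact subset_convexHull ℝ _ ⟨m, hm, rfl⟩
  have hdec : ∀ i, D (i + 1) ⊆ D i := by
    intro i
    induction i with
    | zero => exact h10
    | succ k ih =>
      calc D (k + 1 + 1) = Mid2 (D (k + 1)) ∪ Δ := hstep (k + 1)
        _ ⊆ Mid2 (D k) ∪ Δ := union_subset_union_left _ (mid2_mono ih)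
        _ = D (k + 1) := (hstep k).symm
  have hchain : ∀ i, D i ⊆ D 0 := by
    intro i
    induction i with
    | zero => exact Subset.rfl
    | succ k ih => exact (hdec k).trans ih
  have hD0fin : (D 0).Finite := by rw [h0]; exact convZ_finite hfin
  have hDfin : ∀ i, (D i).Finite := fun i => hD0fin.subset (hchain i)
  -- find a stabilization point
  have hex : ∃ N, D (N + 1) = D N := by
    by_contra hc
    push_neg at hc
    have hss : ∀ N, D (N + 1) ⊂ D N := fun N => (hdec N).ssubset_of_ne (hc N)
    have hcard : ∀ k, (D k).ncard + k ≤ (D 0).ncard := by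
      intro k
      induction k with
      | zero => simp
      | succ m ih =>
        have := Set.ncard_lt_ncard (hss m) (hDfin m)
        omega
    have := hcard ((D 0).ncard + 1)
    omega
  obtain ⟨N, hN⟩ := hex
  have hconst : ∀ k, D (N + k) = D N := by
    intro k
    induction k with
    | zero => rfl
    | succ m ih =>
      have : D (N + m + 1) = D (N + 1) := by rw [hstep (N + m), ih, ← hstep N]
      rw [show N + (m + 1) = N + m + 1 from rfl, this, hN]
  refine ⟨fun i _ => hdec i, N, ?_, ?_, ?_⟩
  · intro k hk
    have : D (N + (k - N)) = D N := hconst (k - N)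
    rwa [Nat.add_sub_cancel' hk] at this
  · refine ⟨hDfin N, ?_, ?_⟩
    · intro p hp
      rw [← hN, hstep N]
      exact Or.inr hp
    · intro p hp
      rw [← hN, hstep N] at hp
      exact hp
  · intro L hL
    have hall : ∀ i, L ⊆ D i := by
      intro i
      induction i with
      | zero => rw [h0]; exact mediated_subset_convZ hfin hL.1 hL.2.2
      | succ m ih =>
        rw [hstep m]
        intro p hp
        rcases hL.2.2 hp with hm | hd
        · exact Or.inl (mid2_mono ih hm)
        · exact Or.inr hd
    exact hall N
end

section
/- Let Δ₁ = {0, v₁, …, v_k} and Δ₂ = {0, u₁, …, u_k} be two k-simplicial sets in (2ℤ)^n containing the origin. There exists a linear MMS preserving transformation T (i.e., T(x) = A x with A ∈ GL_n(ℤ)) with T(Δ₁)* = Δ₂* if the lattices generated by the rows of the matrices [v₁ ⋯ v_k] and [u₁ ⋯ u_k] coincide up to a permutation of coordinates. -/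
open Set Matrix LinearMap Module
set_option maxSynthPendingDepth 2
set_option maxHeartbeats 1000000

/-- The maximal `Δ`-mediated set: the union of all `Δ`-mediated sets. -/
def MMS {n : ℕ} (Δ : Set (Fin n → ℤ)) : Set (Fin n → ℤ) := ⋃₀ {L | IsMediated Δ L}

/-- A `k`-dimensional simplicial set: `k+1` affinely independent even lattice points. -/
def IsSimplicial {n : ℕ} (k : ℕ) (Δ : Set (Fin n → ℤ)) : Prop :=
  (∀ p ∈ Δ, Even2 p) ∧ ∃ f : Fin (k + 1) → (Fin n → ℤ),
    Set.range f = Δ ∧ AffineIndependent ℝ (fun i => toR (f i))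

/-- The set of integer points whose real image lies in `T(toR(Δ))`,
i.e., the integral realization of the image `T(Δ)`. -/
def ImgZ {n : ℕ} (T : (Fin n → ℝ) → (Fin n → ℝ)) (Δ : Set (Fin n → ℤ)) :
    Set (Fin n → ℤ) := toR ⁻¹' (T '' (toR '' Δ))

/-- `T : ℝ^n → ℝ^n` is maximal mediated set preserving. -/
def MMSPreserving {n : ℕ} (T : (Fin n → ℝ) → (Fin n → ℝ)) : Prop :=
  ∀ (k : ℕ) (Δ : Set (Fin n → ℤ)), IsSimplicial k Δ →
    (T '' (toR '' Δ) ⊆ Set.range (toR (n := n)) ∧ IsSimplicial k (ImgZ T Δ)) ∧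
    Set.BijOn T (toR '' MMS Δ) (toR '' MMS (ImgZ T Δ)) ∧
    Set.BijOn T (toR '' convZ Δ) (toR '' convZ (ImgZ T Δ))




lemma exists_section {M N : Type*} [AddCommGroup M] [Module ℤ M] [AddCommGroup N]
    [Module ℤ N] [Module.Projective ℤ N] (f : M →ₗ[ℤ] N) (hf : Function.Surjective f) :
    ∃ s : N →ₗ[ℤ] M, f ∘ₗ s = LinearMap.id := by
  obtain ⟨s, hs⟩ := Module.projective_lifting_property f LinearMap.id hf
  exact ⟨s, hs⟩

lemma exists_equiv_comp {n k : ℕ}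
    (f g : (Fin n → ℤ) →ₗ[ℤ] (Fin k → ℤ)) (h : LinearMap.range f = LinearMap.range g) :
    ∃ e : (Fin n → ℤ) ≃ₗ[ℤ] (Fin n → ℤ), ∀ x, f (e x) = g x := by
  classical
  have hgL : ∀ x, g x ∈ LinearMap.range f := fun x => by
    rw [h]; exact LinearMap.mem_range_self g x
  set f' := f.rangeRestrict with hf'
  set g' := g.codRestrict (LinearMap.range f) hgL with hg'
  have hf'surj : Function.Surjective f' := f.surjective_rangeRestrict
  have hg'surj : Function.Surjective g' := by
    rintro ⟨y, hy⟩
    rw [h] at hy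
    obtain ⟨x, rfl⟩ := hy
    exact ⟨x, rfl⟩
  obtain ⟨sf, hsf⟩ := Module.projective_lifting_property f' LinearMap.id hf'surj
  obtain ⟨sg, hsg⟩ := Module.projective_lifting_property g' LinearMap.id hg'surj
  have hf'sf : ∀ l : LinearMap.range f, f' (sf l) = l := fun l => by
    have := LinearMap.ext_iff.mp hsf l; simpa using this
  have hg'sg : ∀ l : LinearMap.range f, g' (sg l) = l := fun l => by
    have := LinearMap.ext_iff.mp hsg l; simpa using this
  have hfval : ∀ x, (f' x : Fin k → ℤ) = f x := fun x => rfl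
  have hgval : ∀ x, (g' x : Fin k → ℤ) = g x := fun x => rfl
  -- projections onto kernels
  have hkerf : ∀ x, f (x - sf (f' x)) = 0 := by
    intro x
    have : f (sf (f' x)) = f x := congrArg Subtype.val (hf'sf (f' x))
    simp [map_sub, this]
  have hkerg : ∀ x, g (x - sg (g' x)) = 0 := by
    intro x
    have : g (sg (g' x)) = g x := congrArg Subtype.val (hg'sg (g' x))
    simp [map_sub, this]
  set pF : (Fin n → ℤ) →ₗ[ℤ] (LinearMap.ker f) :=
    (LinearMap.id - sf ∘ₗ f').codRestrict (LinearMap.ker f) (fun x => by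
      simpa using hkerf x) with hpF
  set pG : (Fin n → ℤ) →ₗ[ℤ] (LinearMap.ker g) :=
    (LinearMap.id - sg ∘ₗ g').codRestrict (LinearMap.ker g) (fun x => by
      simpa using hkerg x) with hpG
  have hpFval : ∀ x, (pF x : Fin n → ℤ) = x - sf (f' x) := fun x => rfl
  have hpGval : ∀ x, (pG x : Fin n → ℤ) = x - sg (g' x) := fun x => rfl
  -- the two product decompositions
  have hf'ker : ∀ y : LinearMap.ker f, f' (y : Fin n → ℤ) = 0 := by
    intro y; apply Subtype.ext; simp [hf']
  have hg'ker : ∀ y : LinearMap.ker g, g' (y : Fin n → ℤ) = 0 := by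
    intro y; apply Subtype.ext; simp [hg']
  have eF : (Fin n → ℤ) ≃ₗ[ℤ] (LinearMap.ker f × LinearMap.range f) := by
    refine LinearEquiv.ofLinear (pF.prod f')
      ((LinearMap.ker f).subtype ∘ₗ LinearMap.fst ℤ _ _ + sf ∘ₗ LinearMap.snd ℤ _ _) ?_ ?_
    · apply LinearMap.ext; rintro ⟨y, l⟩
      have h1 : f' ((y : Fin n → ℤ) + sf l) = l := by
        rw [map_add, hf'ker, hf'sf, zero_add]
      refine Prod.ext (Subtype.ext ?_) ?_
      · show (pF ((y : Fin n → ℤ) + sf l) : Fin n → ℤ) = (y : Fin n → ℤ)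
        rw [hpFval, h1]; abel
      · exact h1
    · apply LinearMap.ext; intro x
      simp [hpFval]
  have eG : (Fin n → ℤ) ≃ₗ[ℤ] (LinearMap.ker g × LinearMap.range f) := by
    refine LinearEquiv.ofLinear (pG.prod g')
      ((LinearMap.ker g).subtype ∘ₗ LinearMap.fst ℤ _ _ + sg ∘ₗ LinearMap.snd ℤ _ _) ?_ ?_
    · apply LinearMap.ext; rintro ⟨y, l⟩
      have h1 : g' ((y : Fin n → ℤ) + sg l) = l := by
        rw [map_add, hg'ker, hg'sg, zero_add]
      refine Prod.ext (Subtype.ext ?_) ?_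
      · show (pG ((y : Fin n → ℤ) + sg l) : Fin n → ℤ) = (y : Fin n → ℤ)
        rw [hpGval, h1]; abel
      · exact h1
    · apply LinearMap.ext; intro x
      simp [hpGval]
  -- equal finranks of the kernels
  have hrkF : Module.finrank ℤ (Fin n → ℤ) =
      Module.finrank ℤ (LinearMap.ker f) + Module.finrank ℤ (LinearMap.range f) := by
    rw [eF.finrank_eq, Module.finrank_prod]
  have hrkG : Module.finrank ℤ (Fin n → ℤ) =
      Module.finrank ℤ (LinearMap.ker g) + Module.finrank ℤ (LinearMap.range f) := by
    rw [eG.finrank_eq, Module.finrank_prod]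
  have hrk : Module.finrank ℤ (LinearMap.ker g) = Module.finrank ℤ (LinearMap.ker f) := by
    omega
  -- isomorphism between the kernels
  have bF := Module.Free.chooseBasis ℤ (LinearMap.ker f)
  have bG := Module.Free.chooseBasis ℤ (LinearMap.ker g)
  have hcard : Fintype.card (Module.Free.ChooseBasisIndex ℤ (LinearMap.ker g)) =
      Fintype.card (Module.Free.ChooseBasisIndex ℤ (LinearMap.ker f)) := by
    rw [← Module.finrank_eq_card_chooseBasisIndex, ← Module.finrank_eq_card_chooseBasisIndex]
    exact hrk
  set kerIso : (LinearMap.ker g) ≃ₗ[ℤ] (LinearMap.ker f) :=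
    bG.equiv bF (Fintype.equivOfCardEq hcard) with hkerIso
  -- the final equivalence
  set E : (Fin n → ℤ) →ₗ[ℤ] (Fin n → ℤ) :=
    (LinearMap.ker f).subtype ∘ₗ kerIso.toLinearMap ∘ₗ pG + sf ∘ₗ g' with hE
  set E' : (Fin n → ℤ) →ₗ[ℤ] (Fin n → ℤ) :=
    (LinearMap.ker g).subtype ∘ₗ kerIso.symm.toLinearMap ∘ₗ pF + sg ∘ₗ f' with hE'
  have hEx : ∀ x, E x = ((kerIso (pG x) : Fin n → ℤ)) + sf (g' x) := fun x => rfl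
  have hE'x : ∀ x, E' x = ((kerIso.symm (pF x) : Fin n → ℤ)) + sg (f' x) := fun x => rfl
  have hf'E : ∀ x, f' (E x) = g' x := by
    intro x
    rw [hEx, map_add, hf'ker, hf'sf, zero_add]
  have hg'E' : ∀ x, g' (E' x) = f' x := by
    intro x
    rw [hE'x, map_add, hg'ker, hg'sg, zero_add]
  have hpFE : ∀ x, pF (E x) = kerIso (pG x) := by
    intro x
    apply Subtype.ext
    rw [hpFval, hf'E, hEx]
    abel
  have hpGE' : ∀ x, pG (E' x) = kerIso.symm (pF x) := by
    intro x
    apply Subtype.ext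
    rw [hpGval, hg'E', hE'x]
    abel
  refine ⟨LinearEquiv.ofLinear E E' ?_ ?_, ?_⟩
  · apply LinearMap.ext; intro x
    simp only [LinearMap.comp_apply, LinearMap.id_apply]
    rw [hEx, hpGE', hg'E', LinearEquiv.apply_symm_apply, hpFval]
    abel
  · apply LinearMap.ext; intro x
    simp only [LinearMap.comp_apply, LinearMap.id_apply]
    rw [hE'x, hpFE, hf'E, LinearEquiv.symm_apply_apply, hpGval]
    abel
  · intro x
    show f (E x) = g x
    have h1 : f (E x) = (f' (E x) : Fin k → ℤ) := (hfval _).symm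
    rw [h1, hf'E]
    exact hgval x
lemma exists_unimodular {n k : ℕ} (v u : Fin k → (Fin n → ℤ)) (σ : Equiv.Perm (Fin k))
    (hlat : Submodule.span ℤ (Set.range fun i : Fin n => fun j => v j i) =
        Submodule.map (LinearMap.funLeft ℤ ℤ σ)
          (Submodule.span ℤ (Set.range fun i : Fin n => fun j => u j i))) :
    ∃ A : Matrix (Fin n) (Fin n) ℤ, (A.det = 1 ∨ A.det = -1) ∧
      ∀ j, A.mulVec (v j) = u (σ j) := by
  classical
  set Mv : Matrix (Fin n) (Fin k) ℤ := Matrix.of fun i j => v j i with hMv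
  set Mu : Matrix (Fin n) (Fin k) ℤ := Matrix.of fun i j => u (σ j) i with hMu
  have hrange : LinearMap.range Mv.vecMulLinear = LinearMap.range Mu.vecMulLinear := by
    rw [range_vecMulLinear, range_vecMulLinear]
    show Submodule.span ℤ (Set.range fun i : Fin n => fun j => v j i) =
      Submodule.span ℤ (Set.range fun i : Fin n => fun j => u (σ j) i)
    rw [hlat, Submodule.map_span, ← Set.range_comp]
    rfl
  obtain ⟨e, he⟩ := exists_equiv_comp Mv.vecMulLinear Mu.vecMulLinear hrange
  set A : Matrix (Fin n) (Fin n) ℤ := Matrix.of fun m i => e (Pi.single m 1) i with hA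
  have hAT : Aᵀ = LinearMap.toMatrix' (e : (Fin n → ℤ) →ₗ[ℤ] (Fin n → ℤ)) := by
    ext i j
    simp [hA, LinearMap.toMatrix', Matrix.transpose]
  have hdet : IsUnit A.det := by
    rw [← Matrix.det_transpose, hAT]
    have h1 : LinearMap.toMatrix' (e : (Fin n → ℤ) →ₗ[ℤ] (Fin n → ℤ)) *
        LinearMap.toMatrix' (e.symm : (Fin n → ℤ) →ₗ[ℤ] (Fin n → ℤ)) = 1 := by
      rw [← LinearMap.toMatrix'_comp, ← LinearMap.toMatrix'_id]
      congr 1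
      ext x
      simp
    have h2 : (LinearMap.toMatrix' (e : (Fin n → ℤ) →ₗ[ℤ] (Fin n → ℤ))).det *
        (LinearMap.toMatrix' (e.symm : (Fin n → ℤ) →ₗ[ℤ] (Fin n → ℤ))).det = 1 := by
      rw [← Matrix.det_mul, h1, Matrix.det_one]
    exact IsUnit.of_mul_eq_one _ h2
  refine ⟨A, Int.isUnit_iff.mp hdet, ?_⟩
  intro j
  funext m
  have h2 : A.mulVec (v j) m = Mv.vecMulLinear (e (Pi.single m 1)) j := by
    simp only [Matrix.mulVec, Matrix.vecMulLinear_apply, Matrix.vecMul, dotProduct]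
    simp [hA, hMv]
  rw [h2, he, Matrix.vecMulLinear_apply, Matrix.single_one_vecMul]
  rfl

section Unimodular

variable {n : ℕ} (A B : Matrix (Fin n) (Fin n) ℤ)

lemma toR_injective : Function.Injective (toR (n := n)) := by
  intro p q h
  funext i
  have h2 := congrFun h i
  simp only [toR] at h2
  exact_mod_cast h2

lemma toR_mulVec (p : Fin n → ℤ) :
    toR (A.mulVec p) = (A.map (Int.cast : ℤ → ℝ)).mulVec (toR p) := by
  funext i
  simp [toR, Matrix.mulVec, dotProduct, Matrix.map]

lemma even2_mulVec {p : Fin n → ℤ} (hp : Even2 p) : Even2 (A.mulVec p) := by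
  intro i
  show 2 ∣ ∑ j, A i j * p j
  exact Finset.dvd_sum fun j _ => Dvd.dvd.mul_left (hp j) _

lemma cast_mul_eq_one {C D : Matrix (Fin n) (Fin n) ℤ} (hCD : C * D = 1) :
    C.map (Int.cast : ℤ → ℝ) * D.map (Int.cast : ℤ → ℝ) = 1 := by
  have h := Matrix.map_mul (L := C) (M := D) (f := Int.castRingHom ℝ)
  rw [hCD, Matrix.map_one _ (map_zero _) (map_one _)] at h
  simpa [Int.coe_castRingHom] using h.symm

variable (hAB : A * B = 1) (hBA : B * A = 1)

include hBA in
lemma mulVec_leftInv (x : Fin n → ℤ) : B.mulVec (A.mulVec x) = x := by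
  rw [Matrix.mulVec_mulVec, hBA, Matrix.one_mulVec]

include hBA in
lemma mulVec_inj : Function.Injective (fun x => A.mulVec x) := by
  intro x y h
  have := congrArg (fun z => B.mulVec z) h
  simpa [mulVec_leftInv A B hBA] using this

include hBA in
lemma med_image {Δ L : Set (Fin n → ℤ)} (h : IsMediated Δ L) :
    IsMediated ((fun p => A.mulVec p) '' Δ) ((fun p => A.mulVec p) '' L) := by
  obtain ⟨hfin, hsub, hmid⟩ := h
  refine ⟨hfin.image _, Set.image_mono hsub, ?_⟩
  rintro _ ⟨x, hx, rfl⟩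
  rcases hmid hx with hx' | hx'
  · obtain ⟨s, hs, t, ht, hes, het, hst, hsum⟩ := hx'
    left
    refine ⟨A.mulVec s, Set.mem_image_of_mem _ hs, A.mulVec t, Set.mem_image_of_mem _ ht,
      even2_mulVec A hes, even2_mulVec A het, ?_, ?_⟩
    · exact fun hc => hst (mulVec_inj A B hBA hc)
    · have : A.mulVec (s + t) = A.mulVec (2 • x) := congrArg _ hsum
      rwa [Matrix.mulVec_add, two_smul, Matrix.mulVec_add, ← two_smul ℕ] at this
  · exact Or.inr (Set.mem_image_of_mem _ hx')

include hAB hBA in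
lemma MMS_image (Δ : Set (Fin n → ℤ)) :
    MMS ((fun p => A.mulVec p) '' Δ) = (fun p => A.mulVec p) '' MMS Δ := by
  have hinvAB : ∀ S : Set (Fin n → ℤ),
      (fun p => B.mulVec p) '' ((fun p => A.mulVec p) '' S) = S := by
    intro S
    rw [Set.image_image]
    simp only [mulVec_leftInv A B hBA, Set.image_id']
  ext y
  constructor
  · rintro ⟨L, hL, hy⟩
    have h2 : IsMediated Δ ((fun p => B.mulVec p) '' L) := by
      have := med_image B A hAB (h := hL)
      rwa [hinvAB Δ] at this
    refine ⟨B.mulVec y, ⟨_, h2, Set.mem_image_of_mem _ hy⟩, ?_⟩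
    have : A.mulVec (B.mulVec y) = y := by
      rw [Matrix.mulVec_mulVec, hAB, Matrix.one_mulVec]
    exact this
  · rintro ⟨x, ⟨L, hL, hx⟩, rfl⟩
    exact ⟨_, med_image A B hBA hL, Set.mem_image_of_mem _ hx⟩

include hAB hBA in
lemma convZ_image (Δ : Set (Fin n → ℤ)) :
    convZ ((fun p => A.mulVec p) '' Δ) = (fun p => A.mulVec p) '' convZ Δ := by
  have hAr : ∀ S : Set (Fin n → ℤ),
      toR '' ((fun p => A.mulVec p) '' S)
        = (A.map (Int.cast : ℤ → ℝ)).mulVecLin '' (toR '' S) := by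
    intro S
    rw [Set.image_image, Set.image_image]
    exact Set.image_congr fun p _ => toR_mulVec A p
  ext y
  have hArBr : (A.map (Int.cast : ℤ → ℝ)) * (B.map (Int.cast : ℤ → ℝ)) = 1 :=
    cast_mul_eq_one hAB
  have hBrAr : (B.map (Int.cast : ℤ → ℝ)) * (A.map (Int.cast : ℤ → ℝ)) = 1 :=
    cast_mul_eq_one hBA
  constructor
  · intro hy
    have hy' : toR y ∈ convexHull ℝ (toR '' ((fun p => A.mulVec p) '' Δ)) := hy
    rw [hAr, ← LinearMap.image_convexHull] at hy'
    obtain ⟨q, hq, hqy⟩ := hy'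
    have hqy' : (A.map (Int.cast : ℤ → ℝ)).mulVec q = toR y := by
      simpa [Matrix.mulVecLin_apply] using hqy
    refine ⟨B.mulVec y, ?_, ?_⟩
    · show toR (B.mulVec y) ∈ convexHull ℝ (toR '' Δ)
      have heq : toR (B.mulVec y) = q := by
        rw [toR_mulVec, ← hqy', Matrix.mulVec_mulVec, hBrAr, Matrix.one_mulVec]
      rwa [heq]
    · show A.mulVec (B.mulVec y) = y
      rw [Matrix.mulVec_mulVec, hAB, Matrix.one_mulVec]
  · rintro ⟨x, hx, rfl⟩
    show toR (A.mulVec x) ∈ convexHull ℝ (toR '' ((fun p => A.mulVec p) '' Δ))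
    rw [hAr, ← LinearMap.image_convexHull]
    exact ⟨toR x, hx, (toR_mulVec A x).symm⟩

include hAB hBA in
theorem mmsPreserving_of_unimodular :
    MMSPreserving (fun x => (A.map (Int.cast : ℤ → ℝ)).mulVec x) := by
  classical
  set Ar := A.map (Int.cast : ℤ → ℝ) with hAr
  set Br := B.map (Int.cast : ℤ → ℝ) with hBr
  have hArBr : Ar * Br = 1 := cast_mul_eq_one hAB
  have hBrAr : Br * Ar = 1 := cast_mul_eq_one hBA
  have hTinj : Function.Injective (fun x : Fin n → ℝ => Ar.mulVec x) := by
    intro x y h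
    have := congrArg (fun z => Br.mulVec z) h
    simpa [Matrix.mulVec_mulVec, hBrAr, Matrix.one_mulVec] using this
  have himg : ∀ S : Set (Fin n → ℤ),
      (fun x => Ar.mulVec x) '' (toR '' S) = toR '' ((fun p => A.mulVec p) '' S) := by
    intro S
    rw [Set.image_image, Set.image_image]
    exact Set.image_congr fun p _ => (toR_mulVec A p).symm
  intro k Δ hΔ
  have hImgZ : ImgZ (fun x => Ar.mulVec x) Δ = (fun p => A.mulVec p) '' Δ := by
    rw [ImgZ, himg, Set.preimage_image_eq _ toR_injective]
  refine ⟨⟨?_, ?_⟩, ?_, ?_⟩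
  · rw [himg]
    exact Set.image_subset_range _ _
  · rw [hImgZ]
    obtain ⟨hev, f, hrange, haff⟩ := hΔ
    refine ⟨?_, (fun p => A.mulVec p) ∘ f, ?_, ?_⟩
    · rintro _ ⟨q, hq, rfl⟩
      exact even2_mulVec A (hev q hq)
    · rw [Set.range_comp, hrange]
    · have key : (fun i : Fin (k+1) => toR (((fun p => A.mulVec p) ∘ f) i)) =
          (Ar.mulVecLin.toAffineMap : (Fin n → ℝ) →ᵃ[ℝ] (Fin n → ℝ)) ∘
            (fun i => toR (f i)) := by
        funext i
        simp [Function.comp, toR_mulVec A (f i), hAr]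
      rw [key]
      exact haff.map' _ (by exact hTinj)
  · rw [hImgZ, MMS_image A B hAB hBA, ← himg]
    exact hTinj.injOn.bijOn_image
  · rw [hImgZ, convZ_image A B hAB hBA, ← himg]
    exact hTinj.injOn.bijOn_image

end Unimodular


/-- Let `Δ₁ = {0, v₁, …, v_k}` and `Δ₂ = {0, u₁, …, u_k}` be `k`-simplicial sets in
`(2ℤ)^n`. If the lattices generated by the rows of `[v₁ ⋯ v_k]` and `[u₁ ⋯ u_k]`
coincide up to a permutation of coordinates, then there is a linear MMS preserving
map `T(x) = Ax` with `A ∈ GL_n(ℤ)` such that `T(Δ₁)* = Δ₂*`. -/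
theorem mms_invariant_of_lattice {n k : ℕ} (v u : Fin k → (Fin n → ℤ))
    (hv : ∀ j, Even2 (v j)) (hu : ∀ j, Even2 (u j))
    (hΔ₁ : AffineIndependent ℝ (fun i : Fin (k + 1) => toR ((Fin.cons 0 v : Fin (k + 1) → Fin n → ℤ) i)))
    (hΔ₂ : AffineIndependent ℝ (fun i : Fin (k + 1) => toR ((Fin.cons 0 u : Fin (k + 1) → Fin n → ℤ) i)))
    (hlat : ∃ σ : Equiv.Perm (Fin k),
      Submodule.span ℤ (Set.range fun i : Fin n => fun j => v j i) =
        Submodule.map (LinearMap.funLeft ℤ ℤ σ)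
          (Submodule.span ℤ (Set.range fun i : Fin n => fun j => u j i))) :
    ∃ A : Matrix (Fin n) (Fin n) ℤ, (A.det = 1 ∨ A.det = -1) ∧
      MMSPreserving (fun x => (A.map (Int.cast : ℤ → ℝ)).mulVec x) ∧
      MMS ((fun p => A.mulVec p) '' (insert (0 : Fin n → ℤ) (Set.range v))) =
        MMS (insert (0 : Fin n → ℤ) (Set.range u)) := by
  classical
  obtain ⟨σ, hσ⟩ := hlat
  obtain ⟨A, hdet, hmul⟩ := exists_unimodular v u σ hσ
  have hunit : IsUnit A.det := by rcases hdet with h | h <;> rw [h] <;> simp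
  have hinv : Invertible A := A.invertibleOfIsUnitDet hunit
  refine ⟨A, hdet, mmsPreserving_of_unimodular A (⅟A) (mul_invOf_self A) (invOf_mul_self A), ?_⟩
  have himg : (fun p => A.mulVec p) '' (insert (0 : Fin n → ℤ) (Set.range v)) =
      insert (0 : Fin n → ℤ) (Set.range u) := by
    rw [Set.image_insert_eq]
    have h0 : A.mulVec (0 : Fin n → ℤ) = 0 := Matrix.mulVec_zero A
    rw [h0]
    congr 1
    rw [← Set.range_comp]
    have : (fun p => A.mulVec p) ∘ v = u ∘ σ := by
      funext j
      exact hmul j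
    rw [this]
    exact σ.surjective.range_comp u
  rw [himg]
end
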